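/- The function G₁ : ℝ → ℝ defined by G₁(s) = F₁'(s)·s is continuously differentiable on ℝ, and there exists C > 0 such that |G₁'(s)| ≤ C·(1 + |s|) for all s ∈ ℝ. -/

import Mathlib

open Real Filter Topology

noncomputable def F1 (δ₀ s : ℝ) : ℝ :=
  if s = 0 then 0
  else if |s| < δ₀ then -(1/2) * s^2 * Real.log (s^2)
  else -(1/2) * s^2 * (Real.log (δ₀^2) + 3) + 2*δ₀*|s| - δ₀^2/2

noncomputable def F1' (δ₀ s : ℝ) : ℝ :=
  if s = 0 then 0
  else if |s| < δ₀ then -(Real.log (s^2) + 1) * s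
  else -(Real.log (δ₀^2) + 3) * s + 2*δ₀*(Real.sign s)

noncomputable def F2 (δ₀ s : ℝ) : ℝ :=
  if |s| < δ₀ then 0
  else (1/2) * s^2 * Real.log (s^2/δ₀^2) + 2*δ₀*|s| - (3/2)*s^2 - δ₀^2/2

noncomputable def F2' (δ₀ s : ℝ) : ℝ :=
  if |s| < δ₀ then 0
  else s * Real.log (s^2/δ₀^2) - 2*s + 2*δ₀*(Real.sign s)

/-- The glued function `G₁(s) = F₁'(s)·s` written piecewise without the `s = 0` case. -/
noncomputable def G1 (δ₀ s : ℝ) : ℝ :=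
  if δ₀ ≤ |s| then -(Real.log (δ₀^2) + 3) * s^2 + 2*δ₀*|s|
  else -(Real.log (s^2) + 1) * s^2

/-- The derivative of `G1`. -/
noncomputable def G1d (δ₀ s : ℝ) : ℝ :=
  if δ₀ ≤ |s| then -2*(Real.log (δ₀^2) + 3) * s + 2*(max (min s δ₀) (-δ₀))
  else -2*s*(Real.log (s^2) + 2)

lemma phi_hasDerivAt {s : ℝ} (hs : s ≠ 0) :
    HasDerivAt (fun x : ℝ => -(Real.log (x^2) + 1) * x^2) (-2*s*(Real.log (s^2) + 2)) s := by
  have h1 : HasDerivAt (fun x : ℝ => x^2) (2*s) s := by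
    simpa using hasDerivAt_pow 2 s
  have h2 : HasDerivAt (fun x : ℝ => Real.log (x^2)) ((2*s) / s^2) s :=
    h1.log (pow_ne_zero 2 hs)
  have h3 := ((h2.add_const 1).neg.mul h1)
  refine h3.congr_deriv ?_
  have hss : s^2 ≠ 0 := pow_ne_zero 2 hs
  simp only [Pi.neg_apply]
  field_simp
  ring

lemma phi_hasDerivAt_zero :
    HasDerivAt (fun x : ℝ => -(Real.log (x^2) + 1) * x^2) 0 0 := by
  rw [hasDerivAt_iff_tendsto_slope]
  have hk : Continuous (fun x : ℝ => -(2*(x * Real.log x) + x)) := by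
    have := Real.continuous_mul_log
    exact ((continuous_const.mul this).add continuous_id).neg
  have hk0 : Tendsto (fun x : ℝ => -(2*(x * Real.log x) + x)) (𝓝[≠] (0:ℝ)) (𝓝 0) := by
    have h2 := (hk.tendsto 0).mono_left (nhdsWithin_le_nhds : 𝓝[≠] (0:ℝ) ≤ 𝓝 0)
    simpa using h2
  refine hk0.congr' ?_
  filter_upwards [self_mem_nhdsWithin] with x hx
  have hx0 : x ≠ 0 := hx
  rw [slope_def_field]
  simp only [Real.log_pow, Real.log_zero]
  push_cast
  field_simp
  ring

lemma G1_eq (δ₀ : ℝ) (hδ₀ : 0 < δ₀) : (fun s : ℝ => F1' δ₀ s * s) = G1 δ₀ := by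
  funext s
  simp only [F1', G1]
  by_cases h0 : s = 0
  · subst h0
    simp [not_le.2 hδ₀, hδ₀.ne']
  · rw [if_neg h0]
    by_cases h1 : |s| < δ₀
    · rw [if_pos h1, if_neg (not_le.2 h1)]
      ring
    · rw [if_neg h1, if_pos (not_lt.1 h1)]
      rcases lt_or_gt_of_ne h0 with h | h
      · rw [Real.sign_of_neg h, abs_of_neg h]; ring
      · rw [Real.sign_of_pos h, abs_of_pos h]; ring

lemma G1_hasDerivAt (δ₀ : ℝ) (hδ₀ : 0 < δ₀) (s : ℝ) :
    HasDerivAt (G1 δ₀) (G1d δ₀ s) s := by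
  have habsδ : δ₀ ≤ |δ₀| := by rw [abs_of_pos hδ₀]
  have habsδ' : δ₀ ≤ |(-δ₀)| := by rw [abs_neg, abs_of_pos hδ₀]
  rcases lt_trichotomy |s| δ₀ with hlt | heq | hgt
  · -- inner region
    have hmem : ∀ᶠ x in 𝓝 s, |x| < δ₀ :=
      (isOpen_lt continuous_abs continuous_const).eventually_mem hlt
    have hEq : G1 δ₀ =ᶠ[𝓝 s] (fun x : ℝ => -(Real.log (x^2) + 1) * x^2) := by
      filter_upwards [hmem] with x hx
      simp [G1, not_le.2 hx]
    rw [show G1d δ₀ s = -2*s*(Real.log (s^2) + 2) from if_neg (not_le.2 hlt)]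
    by_cases h0 : s = 0
    · subst h0
      have := phi_hasDerivAt_zero.congr_of_eventuallyEq hEq
      simpa using this
    · exact (phi_hasDerivAt h0).congr_of_eventuallyEq hEq
  · -- boundary
    rcases (abs_eq hδ₀.le).1 heq with hs | hs <;> rw [hs]
    · -- s = δ₀
      have hd : G1d δ₀ δ₀ = -2*(Real.log (δ₀^2) + 3) * δ₀ + 2*δ₀ := by
        rw [G1d, if_pos habsδ, min_self, max_eq_left (by linarith)]
      rw [hd]
      have hG1δ : G1 δ₀ δ₀ = -(Real.log (δ₀^2) + 1) * δ₀^2 := by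
        rw [G1, if_pos habsδ, abs_of_pos hδ₀]; ring
      have h1 : HasDerivWithinAt (G1 δ₀) (-2*(Real.log (δ₀^2) + 3) * δ₀ + 2*δ₀) (Set.Iic δ₀) δ₀ := by
        have hφ : HasDerivAt (fun x : ℝ => -(Real.log (x^2) + 1) * x^2)
            (-2*(Real.log (δ₀^2) + 3) * δ₀ + 2*δ₀) δ₀ := by
          have := phi_hasDerivAt hδ₀.ne'
          convert this using 1; ring
        refine hφ.hasDerivWithinAt.congr_of_eventuallyEq ?_ hG1δ
        have hpos : ∀ᶠ x in 𝓝[Set.Iic δ₀] δ₀, (0:ℝ) < x :=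
          eventually_nhdsWithin_of_eventually_nhds
            ((isOpen_lt continuous_const continuous_id).eventually_mem hδ₀)
        filter_upwards [hpos, self_mem_nhdsWithin] with x hx hx'
        have hxle : x ≤ δ₀ := hx'
        rcases eq_or_lt_of_le hxle with heqx | hxlt
        · rw [heqx]; simpa using hG1δ
        · have : |x| < δ₀ := by rw [abs_of_pos hx]; exact hxlt
          simp [G1, not_le.2 this]
      have h2 : HasDerivWithinAt (G1 δ₀) (-2*(Real.log (δ₀^2) + 3) * δ₀ + 2*δ₀) (Set.Ici δ₀) δ₀ := by
        have hψ : HasDerivAt (fun x : ℝ => -(Real.log (δ₀^2) + 3) * x^2 + 2*δ₀*x)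
            (-2*(Real.log (δ₀^2) + 3) * δ₀ + 2*δ₀) δ₀ := by
          have ha : HasDerivAt (fun x : ℝ => x^2) (2*δ₀) δ₀ := by simpa using hasDerivAt_pow 2 δ₀
          have := (ha.const_mul (-(Real.log (δ₀^2) + 3))).add ((hasDerivAt_id δ₀).const_mul (2*δ₀))
          refine this.congr_deriv ?_; ring
        refine hψ.hasDerivWithinAt.congr_of_eventuallyEq ?_ ?_
        · filter_upwards [self_mem_nhdsWithin] with x hx
          have hxge : δ₀ ≤ x := hx
          have hx0 : (0:ℝ) < x := lt_of_lt_of_le hδ₀ hxge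
          have : δ₀ ≤ |x| := by rw [abs_of_pos hx0]; exact hxge
          rw [G1, if_pos this, abs_of_pos hx0]
        · rw [G1, if_pos habsδ, abs_of_pos hδ₀]
      have := h1.union h2
      rw [Set.Iic_union_Ici, hasDerivWithinAt_univ] at this
      exact this
    · -- s = -δ₀
      have hd : G1d δ₀ (-δ₀) = -2*(Real.log (δ₀^2) + 3) * (-δ₀) - 2*δ₀ := by
        rw [G1d, if_pos habsδ', min_eq_left (by linarith), max_self]
        ring
      rw [hd]
      have hG1δ : G1 δ₀ (-δ₀) = -(Real.log ((-δ₀)^2) + 1) * (-δ₀)^2 := by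
        rw [G1, if_pos habsδ', abs_neg, abs_of_pos hδ₀, neg_sq]
        ring
      have h1 : HasDerivWithinAt (G1 δ₀) (-2*(Real.log (δ₀^2) + 3) * (-δ₀) - 2*δ₀)
          (Set.Iic (-δ₀)) (-δ₀) := by
        have hψ : HasDerivAt (fun x : ℝ => -(Real.log (δ₀^2) + 3) * x^2 - 2*δ₀*x)
            (-2*(Real.log (δ₀^2) + 3) * (-δ₀) - 2*δ₀) (-δ₀) := by
          have ha : HasDerivAt (fun x : ℝ => x^2) (2*(-δ₀)) (-δ₀) := by
            simpa using hasDerivAt_pow 2 (-δ₀)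
          have := (ha.const_mul (-(Real.log (δ₀^2) + 3))).sub
            ((hasDerivAt_id (-δ₀)).const_mul (2*δ₀))
          refine this.congr_deriv ?_; ring
        refine hψ.hasDerivWithinAt.congr_of_eventuallyEq ?_ ?_
        · filter_upwards [self_mem_nhdsWithin] with x hx
          have hxle : x ≤ -δ₀ := hx
          have hx0 : x < 0 := lt_of_le_of_lt hxle (by linarith)
          have : δ₀ ≤ |x| := by rw [abs_of_neg hx0]; linarith
          rw [G1, if_pos this, abs_of_neg hx0]; ring
        · rw [G1, if_pos habsδ', abs_neg, abs_of_pos hδ₀]; ring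
      have h2 : HasDerivWithinAt (G1 δ₀) (-2*(Real.log (δ₀^2) + 3) * (-δ₀) - 2*δ₀)
          (Set.Ici (-δ₀)) (-δ₀) := by
        have hφ : HasDerivAt (fun x : ℝ => -(Real.log (x^2) + 1) * x^2)
            (-2*(Real.log (δ₀^2) + 3) * (-δ₀) - 2*δ₀) (-δ₀) := by
          have := phi_hasDerivAt (s := -δ₀) (neg_ne_zero.2 hδ₀.ne')
          convert this using 1
          rw [neg_sq]
          ring
        refine hφ.hasDerivWithinAt.congr_of_eventuallyEq ?_ hG1δ
        have hneg : ∀ᶠ x in 𝓝[Set.Ici (-δ₀)] (-δ₀), x < (0:ℝ) :=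
          eventually_nhdsWithin_of_eventually_nhds
            ((isOpen_lt continuous_id continuous_const).eventually_mem (by linarith : -δ₀ < (0:ℝ)))
        filter_upwards [hneg, self_mem_nhdsWithin] with x hx hx'
        have hxge : -δ₀ ≤ x := hx'
        rcases eq_or_lt_of_le hxge with heqx | hxlt
        · rw [← heqx]; simpa using hG1δ
        · have : |x| < δ₀ := by rw [abs_of_neg hx]; linarith
          simp [G1, not_le.2 this]
      have := h1.union h2
      rw [Set.Iic_union_Ici, hasDerivWithinAt_univ] at this
      exact this
  · -- outer region
    rcases lt_abs.1 hgt with hpos | hneg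
    · -- δ₀ < s
      have hmem : ∀ᶠ x in 𝓝 s, δ₀ < x :=
        (isOpen_lt continuous_const continuous_id).eventually_mem hpos
      have hψ : HasDerivAt (fun x : ℝ => -(Real.log (δ₀^2) + 3) * x^2 + 2*δ₀*x)
          (-2*(Real.log (δ₀^2) + 3) * s + 2*δ₀) s := by
        have ha : HasDerivAt (fun x : ℝ => x^2) (2*s) s := by simpa using hasDerivAt_pow 2 s
        have := (ha.const_mul (-(Real.log (δ₀^2) + 3))).add ((hasDerivAt_id s).const_mul (2*δ₀))
        refine this.congr_deriv ?_; ring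
      have hEq : G1 δ₀ =ᶠ[𝓝 s] (fun x : ℝ => -(Real.log (δ₀^2) + 3) * x^2 + 2*δ₀*x) := by
        filter_upwards [hmem] with x hx
        have hx0 : (0:ℝ) < x := lt_trans hδ₀ hx
        have : δ₀ ≤ |x| := by rw [abs_of_pos hx0]; exact hx.le
        rw [G1, if_pos this, abs_of_pos hx0]
      have hds : G1d δ₀ s = -2*(Real.log (δ₀^2) + 3) * s + 2*δ₀ := by
        rw [G1d, if_pos hgt.le, min_eq_right hpos.le, max_eq_left (by linarith)]
      rw [hds]
      exact hψ.congr_of_eventuallyEq hEq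
    · -- δ₀ < -s
      have hmem : ∀ᶠ x in 𝓝 s, x < -δ₀ :=
        (isOpen_lt continuous_id continuous_const).eventually_mem (by linarith : s < -δ₀)
      have hψ : HasDerivAt (fun x : ℝ => -(Real.log (δ₀^2) + 3) * x^2 - 2*δ₀*x)
          (-2*(Real.log (δ₀^2) + 3) * s - 2*δ₀) s := by
        have ha : HasDerivAt (fun x : ℝ => x^2) (2*s) s := by simpa using hasDerivAt_pow 2 s
        have := (ha.const_mul (-(Real.log (δ₀^2) + 3))).sub ((hasDerivAt_id s).const_mul (2*δ₀))
        refine this.congr_deriv ?_; ring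
      have hEq : G1 δ₀ =ᶠ[𝓝 s] (fun x : ℝ => -(Real.log (δ₀^2) + 3) * x^2 - 2*δ₀*x) := by
        filter_upwards [hmem] with x hx
        have hx0 : x < 0 := lt_trans hx (by linarith)
        have : δ₀ ≤ |x| := by rw [abs_of_neg hx0]; linarith
        rw [G1, if_pos this, abs_of_neg hx0]; ring
      have hds : G1d δ₀ s = -2*(Real.log (δ₀^2) + 3) * s - 2*δ₀ := by
        rw [G1d, if_pos hgt.le, min_eq_left (by linarith), max_eq_right (by linarith)]
        ring
      rw [hds]
      exact hψ.congr_of_eventuallyEq hEq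

lemma G1d_continuous (δ₀ : ℝ) (hδ₀ : 0 < δ₀) : Continuous (G1d δ₀) := by
  have hη : Continuous (fun s : ℝ => -2*s*(Real.log (s^2) + 2)) := by
    have heq : (fun s : ℝ => -2*s*(Real.log (s^2) + 2))
        = fun s : ℝ => (-4:ℝ)*(s*Real.log s) + (-4:ℝ)*s := by
      funext s
      rw [Real.log_pow]
      push_cast
      ring
    rw [heq]
    exact (continuous_const.mul Real.continuous_mul_log).add (continuous_const.mul continuous_id)
  have hχ : Continuous (fun s : ℝ => -2*(Real.log (δ₀^2) + 3) * s + 2*(max (min s δ₀) (-δ₀))) :=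
    (continuous_const.mul continuous_id).add
      (continuous_const.mul ((continuous_id.min continuous_const).max continuous_const))
  have hGd : G1d δ₀ = fun s => if δ₀ ≤ |s| then
      -2*(Real.log (δ₀^2) + 3) * s + 2*(max (min s δ₀) (-δ₀))
      else -2*s*(Real.log (s^2) + 2) := rfl
  rw [hGd]
  refine Continuous.if_le hχ hη continuous_const continuous_abs ?_
  intro s hs
  rcases (abs_eq hδ₀.le).1 hs.symm with hs' | hs' <;> rw [hs']
  · rw [min_self, max_eq_left (by linarith)]
    ring
  · rw [min_eq_left (by linarith), max_self, neg_sq]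
    ring

lemma G1d_bound (δ₀ : ℝ) (hδ₀ : 0 < δ₀) (hδ₀' : δ₀ < Real.exp (-(3/2))) (s : ℝ) :
    |G1d δ₀ s| ≤ (2*|Real.log (δ₀^2) + 3| + 10) * (1 + |s|) := by
  have hA : (0:ℝ) ≤ |Real.log (δ₀^2) + 3| := abs_nonneg _
  have hδ1 : δ₀ < 1 := lt_trans hδ₀' (by
    calc Real.exp (-(3/2)) < Real.exp 0 := Real.exp_lt_exp.2 (by norm_num)
    _ = 1 := Real.exp_zero)
  rw [G1d]
  by_cases h : δ₀ ≤ |s|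
  · rw [if_pos h]
    have h1 : |max (min s δ₀) (-δ₀)| ≤ 1 := by
      rw [abs_le]
      refine ⟨by linarith [le_max_right (min s δ₀) (-δ₀)], ?_⟩
      have := max_le (le_trans (min_le_right s δ₀) hδ1.le) (by linarith : -δ₀ ≤ (1:ℝ))
      exact this
    have e1 : |(-2)*((Real.log (δ₀^2) + 3) * s)| = 2*(|Real.log (δ₀^2) + 3| * |s|) := by
      rw [show ((-2):ℝ)*((Real.log (δ₀^2) + 3) * s) = -(2*((Real.log (δ₀^2) + 3) * s)) from by
        ring, abs_neg, abs_mul, abs_mul, abs_two]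
    have e2 : |2*(max (min s δ₀) (-δ₀))| = 2*|max (min s δ₀) (-δ₀)| := by
      rw [abs_mul, abs_two]
    have e3 : |(-2*(Real.log (δ₀^2) + 3) * s + 2*(max (min s δ₀) (-δ₀)))|
        ≤ |(-2)*((Real.log (δ₀^2) + 3) * s)| + |2*(max (min s δ₀) (-δ₀))| := by
      rw [show -2*(Real.log (δ₀^2) + 3) * s + 2*(max (min s δ₀) (-δ₀))
          = (-2)*((Real.log (δ₀^2) + 3) * s) + 2*(max (min s δ₀) (-δ₀)) from by ring]
      exact abs_add_le _ _
    rw [e1, e2] at e3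
    nlinarith [abs_nonneg s, abs_nonneg (max (min s δ₀) (-δ₀))]
  · rw [if_neg h]
    push_neg at h
    have hs1 : |s| ≤ 1 := le_trans h.le hδ1.le
    have key : |s * Real.log (s^2)| ≤ 2 := by
      rcases eq_or_ne s 0 with rfl | hs0
      · simp
      · have h0 : 0 < |s| := abs_pos.2 hs0
        have hlt := Real.abs_log_mul_self_lt |s| h0 hs1
        rw [abs_mul, abs_abs] at hlt
        have hlog : Real.log (s^2) = 2 * Real.log |s| := by
          rw [Real.log_abs, Real.log_pow]; push_cast; ring
        have habs : |s * Real.log (s^2)| = 2 * (abs (Real.log |s|) * |s|) := by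
          rw [hlog, show s * (2*Real.log |s|) = 2*(Real.log |s| * s) from by ring,
            abs_mul, abs_mul, abs_two]
        rw [habs]
        nlinarith
    have step : -2*s*(Real.log (s^2) + 2) = (-2)*(s*Real.log (s^2)) + (-4)*s := by ring
    rw [step]
    have e1 : |(-2)*(s*Real.log (s^2))| = 2*|s*Real.log (s^2)| := by
      rw [show ((-2):ℝ)*(s*Real.log (s^2)) = -(2*(s*Real.log (s^2))) from by ring,
        abs_neg, abs_mul, abs_two]
    have e2 : |(-4)*s| = 4*|s| := by
      rw [show ((-4):ℝ)*s = -(4*s) from by ring, abs_neg, abs_mul,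
        abs_of_pos (by norm_num : (0:ℝ) < 4)]
    have e3 := abs_add_le ((-2)*(s*Real.log (s^2))) ((-4)*s)
    rw [e1, e2] at e3
    nlinarith [abs_nonneg s, abs_nonneg (s*Real.log (s^2))]

theorem stmt_12 (δ₀ : ℝ) (hδ₀ : 0 < δ₀) (hδ₀' : δ₀ < Real.exp (-(3/2))) :
    ContDiff ℝ 1 (fun s : ℝ => F1' δ₀ s * s) ∧
      ∃ C : ℝ, 0 < C ∧
        ∀ s : ℝ, |deriv (fun s : ℝ => F1' δ₀ s * s) s| ≤ C * (1 + |s|) := by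
  rw [G1_eq δ₀ hδ₀]
  have hD := G1_hasDerivAt δ₀ hδ₀
  have hderiv : deriv (G1 δ₀) = G1d δ₀ := funext fun s => (hD s).deriv
  constructor
  · rw [contDiff_one_iff_deriv]
    exact ⟨fun s => (hD s).differentiableAt, hderiv ▸ G1d_continuous δ₀ hδ₀⟩
  · refine ⟨2*|Real.log (δ₀^2) + 3| + 10, by positivity, fun s => ?_⟩
    rw [hderiv]
    exact G1d_bound δ₀ hδ₀ hδ₀' s
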